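/- Let f : [0,∞) → ℝ be differentiable with f'(t) ≥ f(t)(f(t) - r) for all t, f(0) ≥ 2σ, where r < 0 and σ < 0 with 2σ ≤ r. Then f(t) ≥ r/(1 - (1 - r/(2σ)) e^{rt}) for all t ≥ 0. -/

import Mathlib

open Set Real

/-- ODE comparison: if `f' ≥ f (f - r)` on `[0,∞)` and `f 0 ≥ 2σ`, with
`r < 0`, `σ < 0`, `2σ ≤ r`, then `f t ≥ r/(1-(1-r/(2σ))e^{rt})` for all `t ≥ 0`. -/
theorem ode_comparison (r σ : ℝ) (hr : r < 0) (hσ : σ < 0) (h2σ : 2 * σ ≤ r)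
    (f f' : ℝ → ℝ)
    (hderiv : ∀ t : ℝ, 0 ≤ t → HasDerivAt f (f' t) t)
    (hineq : ∀ t : ℝ, 0 ≤ t → f t * (f t - r) ≤ f' t)
    (h0 : 2 * σ ≤ f 0) :
    ∀ t : ℝ, 0 ≤ t → r / (1 - (1 - r / (2 * σ)) * Real.exp (r * t)) ≤ f t := by
  set c : ℝ := 1 - r / (2 * σ) with hc
  set s : ℝ → ℝ := fun x => r / (1 - c * Real.exp (r * x)) with hs
  have hσ2 : 2 * σ < 0 := by linarith
  have hrσ : 0 < r / (2 * σ) := div_pos_of_neg_of_neg hr hσ2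
  have hrσ1 : r / (2 * σ) ≤ 1 := by
    rw [div_le_one_of_neg hσ2]; linarith
  have hc0 : 0 ≤ c := by simp [hc]; linarith
  have hc1 : c < 1 := by simp [hc]; linarith
  -- denominator positive for x ≥ 0
  have hD : ∀ x : ℝ, 0 ≤ x → 0 < 1 - c * Real.exp (r * x) := by
    intro x hx
    have he : Real.exp (r * x) ≤ 1 := by
      apply Real.exp_le_one_iff.mpr
      exact mul_nonpos_of_nonpos_of_nonneg hr.le hx
    nlinarith [Real.exp_pos (r * x)]
  -- s 0 = 2σ
  have hs0 : s 0 = 2 * σ := by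
    have : (1 : ℝ) - c * Real.exp (r * 0) = r / (2 * σ) := by
      simp [hc]
    rw [hs]; simp only [this]
    rw [div_div_eq_mul_div, mul_comm r (2 * σ), mul_div_assoc, div_self hr.ne, mul_one]
  -- s bounds
  have hsneg : ∀ x : ℝ, 0 ≤ x → s x < 0 := fun x hx =>
    div_neg_of_neg_of_pos hr (hD x hx)
  have hslb : ∀ x : ℝ, 0 ≤ x → 2 * σ ≤ s x := by
    intro x hx
    have hDx := hD x hx
    rw [hs, le_div_iff₀ hDx]
    have he : Real.exp (r * x) ≤ 1 := Real.exp_le_one_iff.mpr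
      (mul_nonpos_of_nonpos_of_nonneg hr.le hx)
    have h2c : 2 * σ * c = 2 * σ - r := by
      rw [hc, mul_sub, mul_one, ← mul_div_assoc, mul_div_cancel_left₀ _ hσ2.ne]
    nlinarith [Real.exp_pos (r * x)]
  -- derivative of s
  have hsderiv : ∀ x : ℝ, 0 ≤ x → HasDerivAt s (s x * (s x - r)) x := by
    intro x hx
    have hDx := hD x hx
    have h1 : HasDerivAt (fun y : ℝ => r * y) r x := by
      simpa using (hasDerivAt_id x).const_mul r
    have h2 : HasDerivAt (fun y : ℝ => Real.exp (r * y)) (Real.exp (r * x) * r) x := h1.exp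
    have h3 : HasDerivAt (fun y : ℝ => 1 - c * Real.exp (r * y))
        (-(c * (Real.exp (r * x) * r))) x := by
      simpa using ((h2.const_mul c).const_sub 1)
    have h4 := (hasDerivAt_const x r).div h3 hDx.ne'
    refine h4.congr_deriv ?_
    rw [hs]
    field_simp
    ring
  -- continuity of s on [0, ∞)
  have hscont : ∀ x : ℝ, 0 ≤ x → ContinuousAt s x := fun x hx =>
    (hsderiv x hx).continuousAt
  intro t ht
  -- main estimate with ε perturbation
  -- get bound on f on [0, t]
  have hfc : ContinuousOn f (Icc 0 t) := fun x hx =>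
    ((hderiv x hx.1).continuousAt).continuousWithinAt
  obtain ⟨Mf, hMf⟩ := isCompact_Icc.exists_bound_of_continuousOn hfc
  set K : ℝ := |Mf| + (-(2*σ)) + (-r) + 1 with hK
  have hKpos : 0 < K := by
    have := abs_nonneg Mf; rw [hK]; linarith
  have key : ∀ ε : ℝ, 0 < ε → s t ≤ f t + ε * Real.exp (K * t) := by
    intro ε hε
    set B : ℝ → ℝ := fun x => -s x + ε * Real.exp (K * x) with hB
    set B' : ℝ → ℝ := fun x => -(s x * (s x - r)) + ε * Real.exp (K * x) * K with hB'
    have main : ∀ ⦃x⦄, x ∈ Icc 0 t → -f x ≤ B x := by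
      apply image_le_of_deriv_right_lt_deriv_boundary'
        (f := fun x => -f x) (f' := fun x => -f' x)
      · exact fun x hx => ((hderiv x hx.1).continuousAt).continuousWithinAt.neg
      · exact fun x hx => ((hderiv x hx.1).hasDerivWithinAt).neg
      · rw [hB]; simp only [hs0]
        have : 0 < ε * Real.exp (K * 0) := by positivity
        linarith
      · intro x hx
        apply ContinuousWithinAt.add
        · exact ((hscont x hx.1).continuousWithinAt).neg
        · exact (Continuous.continuousWithinAt (by continuity))
      · intro x hx
        apply HasDerivWithinAt.add
        · exact ((hsderiv x hx.1).hasDerivWithinAt).neg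
        · have h1 : HasDerivAt (fun y : ℝ => K * y) K x := by
            simpa using (hasDerivAt_id x).const_mul K
          have h2 := (h1.exp).const_mul ε
          have h2' : HasDerivAt (fun y : ℝ => ε * Real.exp (K * y))
              (ε * Real.exp (K * x) * K) x := by
            exact h2.congr_deriv (by ring)
          exact h2'.hasDerivWithinAt
      · -- the crucial bound at touching points
        intro x hx heq
        have hx0 : 0 ≤ x := hx.1
        have hxt : x ∈ Icc 0 t := ⟨hx.1, hx.2.le⟩
        have hfx : f x = s x - ε * Real.exp (K * x) := by
          have : -f x = -s x + ε * Real.exp (K * x) := heq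
          linarith
        have hbound : f x + s x - r < K := by
          have h1 : |f x| ≤ Mf := by simpa using hMf x hxt
          have h2 : 2 * σ ≤ s x := hslb x hx0
          have h3 : s x < 0 := hsneg x hx0
          have h4 : f x ≤ |Mf| := le_trans (le_abs_self _) (le_trans h1 (le_abs_self Mf))
          rw [hK]; linarith
        have hexp : 0 < ε * Real.exp (K * x) := by positivity
        have hfprime := hineq x hx0
        -- f x * (f x - r) = s(s-r) - ε e (f + s - r)
        have expand : f x * (f x - r) =
            s x * (s x - r) - ε * Real.exp (K * x) * (f x + s x - r) := by
          rw [hfx]; ring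
        have hstep : s x * (s x - r) - ε * Real.exp (K * x) * K < f x * (f x - r) := by
          rw [expand]
          have := mul_lt_mul_of_pos_left hbound hexp
          linarith
        have hlt : s x * (s x - r) - ε * Real.exp (K * x) * K < f' x :=
          lt_of_lt_of_le hstep hfprime
        show -f' x < -(s x * (s x - r)) + ε * Real.exp (K * x) * K
        linarith
    have h2 : -f t ≤ -s t + ε * Real.exp (K * t) := main ⟨ht, le_refl t⟩
    linarith
  -- take ε → 0
  have : s t ≤ f t := by
    apply le_of_forall_pos_le_add
    intro δ hδ
    have hE : 0 < Real.exp (K * t) := Real.exp_pos _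
    have := key (δ / Real.exp (K * t)) (div_pos hδ hE)
    rwa [div_mul_cancel₀ _ hE.ne'] at this
  exact this
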